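/- Let G' = (V', E') be a graph and construct the unweighted spanning-tree hitting set instance on vertex set V' ∪ {r} (r a new vertex) with edge set E' ∪ {{r,v} : v ∈ V'}, required subsets S_e = e for each edge e ∈ E' and S'_e = e ∪ {r} for each e ∈ E'. Then the minimum cardinality h of a spanning-tree hitting set satisfies h = c + |E'|, where c is the minimum cardinality of a vertex cover of G'. -/

import Mathlib

open SimpleGraph

-- adjacency exists from a vertex in a connected graph with another vertex
lemma adj_of_reachable_ne {W : Type*} {H : SimpleGraph W} {a b : W}
    (h : H.Reachable a b) (hne : a ≠ b) : ∃ c, H.Adj a c := by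
  obtain ⟨w⟩ := h
  cases w with
  | nil => exact absurd rfl hne
  | cons h p => exact ⟨_, h⟩

lemma preconnected_of_hub {W : Type*} {H : SimpleGraph W} (hub : W)
    (h : ∀ a, H.Reachable a hub) : H.Preconnected :=
  fun a b => (h a).trans (h b).symm

lemma pair_conn_iff {V : Type} [DecidableEq V] {u v : V} (hne : u ≠ v)
    (F : Finset (Sym2 V)) :
    ((SimpleGraph.fromEdgeSet (↑F : Set (Sym2 V))).induce {x | x ∈ s(u,v)}).Connected
      ↔ s(u,v) ∈ F := by
  have hu : u ∈ {x | x ∈ s(u,v)} := by simp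
  have hv : v ∈ {x | x ∈ s(u,v)} := by simp
  constructor
  · intro hC
    have hreach := hC.preconnected ⟨u, hu⟩ ⟨v, hv⟩
    obtain ⟨c, hadj⟩ := adj_of_reachable_ne hreach (by simp [Subtype.ext_iff, hne])
    have hc : (c : V) = u ∨ (c : V) = v := by
      have := c.2; simpa [Sym2.mem_iff] using this
    simp only [SimpleGraph.comap_adj, SimpleGraph.fromEdgeSet_adj,
      Function.Embedding.coe_subtype] at hadj
    rcases hc with h | h
    · exact absurd h.symm hadj.2
    · rw [h] at hadj; exact_mod_cast hadj.1
  · intro hF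
    have hadj : ((SimpleGraph.fromEdgeSet (↑F : Set (Sym2 V))).induce
        {x | x ∈ s(u,v)}).Adj ⟨u, hu⟩ ⟨v, hv⟩ := by
      simp [SimpleGraph.comap_adj, SimpleGraph.fromEdgeSet_adj,
        Function.Embedding.coe_subtype, hF, hne]
    rw [SimpleGraph.connected_iff]
    refine ⟨preconnected_of_hub ⟨u, hu⟩ fun a => ?_, ⟨⟨u, hu⟩⟩⟩
    have ha : (a : V) = u ∨ (a : V) = v := by
      have := a.2; simpa [Sym2.mem_iff] using this
    rcases ha with h | h
    · rw [show a = ⟨u, hu⟩ from Subtype.ext h]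
    · rw [show a = ⟨v, hv⟩ from Subtype.ext h]; exact hadj.symm.reachable

lemma triple_conn_iff {V : Type} [DecidableEq V] {u v r : V} (hne : u ≠ v)
    (hur : u ≠ r) (hvr : v ≠ r) (F : Finset (Sym2 V)) (hF : s(u,v) ∈ F) :
    ((SimpleGraph.fromEdgeSet (↑F : Set (Sym2 V))).induce ({x | x ∈ s(u,v)} ∪ {r})).Connected
      ↔ (s(r,u) ∈ F ∨ s(r,v) ∈ F) := by
  set S : Set V := {x | x ∈ s(u,v)} ∪ {r} with hS
  have hmem : ∀ x, x ∈ S ↔ (x = u ∨ x = v ∨ x = r) := by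
    intro x; simp [hS, Sym2.mem_iff]; tauto
  have hu : u ∈ S := (hmem u).2 (Or.inl rfl)
  have hv : v ∈ S := (hmem v).2 (Or.inr (Or.inl rfl))
  have hrS : r ∈ S := (hmem r).2 (Or.inr (Or.inr rfl))
  constructor
  · intro hC
    have hreach := hC.preconnected ⟨r, hrS⟩ ⟨u, hu⟩
    obtain ⟨c, hadj⟩ := adj_of_reachable_ne hreach
      (by simp [Subtype.ext_iff, Ne.symm hur])
    simp only [SimpleGraph.comap_adj, SimpleGraph.fromEdgeSet_adj,
      Function.Embedding.coe_subtype] at hadj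
    rcases (hmem c).1 c.2 with h | h | h
    · left; rw [h] at hadj; exact_mod_cast hadj.1
    · right; rw [h] at hadj; exact_mod_cast hadj.1
    · exact absurd h.symm hadj.2
  · intro hstar
    have hadjvu : ((SimpleGraph.fromEdgeSet (↑F : Set (Sym2 V))).induce S).Adj
        ⟨v, hv⟩ ⟨u, hu⟩ := by
      simp only [SimpleGraph.comap_adj, SimpleGraph.fromEdgeSet_adj,
        Function.Embedding.coe_subtype]
      exact ⟨by rwa [Sym2.eq_swap], Ne.symm hne⟩
    rw [SimpleGraph.connected_iff]
    refine ⟨preconnected_of_hub ⟨u, hu⟩ fun a => ?_, ⟨⟨u, hu⟩⟩⟩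
    rcases (hmem a).1 a.2 with h | h | h
    · rw [show a = ⟨u, hu⟩ from Subtype.ext h]
    · rw [show a = ⟨v, hv⟩ from Subtype.ext h]
      exact hadjvu.reachable
    · rw [show a = ⟨r, hrS⟩ from Subtype.ext h]
      rcases hstar with hru | hrv
      · have : ((SimpleGraph.fromEdgeSet (↑F : Set (Sym2 V))).induce S).Adj
            ⟨r, hrS⟩ ⟨u, hu⟩ := by
          simp only [SimpleGraph.comap_adj, SimpleGraph.fromEdgeSet_adj,
            Function.Embedding.coe_subtype]
          exact ⟨by exact_mod_cast hru, Ne.symm hur⟩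
        exact this.reachable
      · have : ((SimpleGraph.fromEdgeSet (↑F : Set (Sym2 V))).induce S).Adj
            ⟨r, hrS⟩ ⟨v, hv⟩ := by
          simp only [SimpleGraph.comap_adj, SimpleGraph.fromEdgeSet_adj,
            Function.Embedding.coe_subtype]
          exact ⟨by exact_mod_cast hrv, Ne.symm hvr⟩
        exact this.reachable.trans hadjvu.reachable


/-- In the unweighted reduction from Vertex Cover (vertex set `V' ∪ {r}`,
edges `E' ∪ {{r,v} : v ∈ V'}`, required subsets `S_e = e` and `S'_e = e ∪ {r}` for `e ∈ E'`),
the minimum cardinality of a spanning-tree hitting set equals `c + |E'|`, where `c` is the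
minimum cardinality of a vertex cover of `G' = (V', E')`. -/
theorem unweighted_reduction_vertex_cover
    {V : Type} [Fintype V] [DecidableEq V]
    (U : Finset V) (r : V) (hr : r ∉ U)
    (E' : Finset (Sym2 V))
    (hE' : ∀ e ∈ E', ∃ u ∈ U, ∃ v ∈ U, u ≠ v ∧ e = s(u, v))
    (Star : Finset (Sym2 V)) (hStar : Star = U.image (fun u => s(r, u)))
    (Conn : Finset (Sym2 V) → Set V → Prop)
    (hConn : ∀ F S, Conn F S ↔
      ((SimpleGraph.fromEdgeSet (↑F : Set (Sym2 V))).induce S).Connected)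
    (STHS : Finset (Sym2 V) → Prop)
    (hSTHS : ∀ F, STHS F ↔ (F ⊆ E' ∪ Star ∧
      (∀ e ∈ E', Conn F {x | x ∈ e}) ∧
      (∀ e ∈ E', Conn F ({x | x ∈ e} ∪ {r})))) :
    sInf {h : ℕ | ∃ F, STHS F ∧ h = F.card}
      = sInf {c : ℕ | ∃ C : Finset V, C ⊆ U ∧ (∀ e ∈ E', ∃ u ∈ C, u ∈ e) ∧ c = C.card}
        + E'.card := by
  have hner : ∀ u ∈ U, u ≠ r := fun u hu h => hr (h ▸ hu)
  -- build a STHS from a vertex cover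
  have hbuild : ∀ C : Finset V, C ⊆ U → (∀ e ∈ E', ∃ u ∈ C, u ∈ e) →
      ∃ F, STHS F ∧ F.card ≤ C.card + E'.card := by
    intro C hCU hcov
    refine ⟨E' ∪ C.image (fun u => s(r, u)), ?_, ?_⟩
    · rw [hSTHS]
      refine ⟨?_, ?_, ?_⟩
      · rw [hStar]
        exact Finset.union_subset_union le_rfl (Finset.image_subset_image hCU)
      · intro e he
        obtain ⟨u, hu, v, hv, huv, rfl⟩ := hE' e he
        rw [hConn]
        exact (pair_conn_iff huv _).2 (Finset.mem_union_left _ he)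
      · intro e he
        obtain ⟨u, hu, v, hv, huv, rfl⟩ := hE' e he
        obtain ⟨w, hwC, hwe⟩ := hcov _ he
        rw [hConn]
        refine (triple_conn_iff huv (hner u hu) (hner v hv) _
          (Finset.mem_union_left _ he)).2 ?_
        rcases Sym2.mem_iff.1 hwe with rfl | rfl
        · exact Or.inl (Finset.mem_union_right _ (Finset.mem_image_of_mem _ hwC))
        · exact Or.inr (Finset.mem_union_right _ (Finset.mem_image_of_mem _ hwC))
    · calc (E' ∪ C.image (fun u => s(r, u))).card
          ≤ E'.card + (C.image (fun u => s(r, u))).card := Finset.card_union_le _ _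
        _ ≤ E'.card + C.card := by gcongr; exact Finset.card_image_le
        _ = C.card + E'.card := Nat.add_comm _ _
  -- extract a vertex cover from a STHS
  have hextract : ∀ F, STHS F → ∃ C : Finset V, C ⊆ U ∧
      (∀ e ∈ E', ∃ u ∈ C, u ∈ e) ∧ C.card + E'.card ≤ F.card := by
    intro F hF
    rw [hSTHS] at hF
    obtain ⟨hsub, hconn1, hconn2⟩ := hF
    have hEF : ∀ e ∈ E', e ∈ F := by
      intro e he
      obtain ⟨u, hu, v, hv, huv, rfl⟩ := hE' e he
      exact (pair_conn_iff huv F).1 ((hConn _ _).1 (hconn1 _ he))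
    refine ⟨U.filter (fun u => s(r, u) ∈ F), Finset.filter_subset _ _, ?_, ?_⟩
    · intro e he
      obtain ⟨u, hu, v, hv, huv, rfl⟩ := hE' e he
      have := (triple_conn_iff huv (hner u hu) (hner v hv) F (hEF _ he)).1
        ((hConn _ _).1 (hconn2 _ he))
      rcases this with h | h
      · exact ⟨u, Finset.mem_filter.2 ⟨hu, h⟩, by simp⟩
      · exact ⟨v, Finset.mem_filter.2 ⟨hv, h⟩, by simp⟩
    · set C := U.filter (fun u => s(r, u) ∈ F) with hC
      have hsub2 : E' ∪ C.image (fun u => s(r, u)) ⊆ F := by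
        intro e he
        rcases Finset.mem_union.1 he with h | h
        · exact hEF _ h
        · obtain ⟨u, hu, rfl⟩ := Finset.mem_image.1 h
          exact (Finset.mem_filter.1 hu).2
      have hdisj : Disjoint E' (C.image (fun u => s(r, u))) := by
        rw [Finset.disjoint_left]
        intro e he hmem
        obtain ⟨w, hw, rfl⟩ := Finset.mem_image.1 hmem
        obtain ⟨u, hu, v, hv, huv, heq⟩ := hE' _ he
        have : r ∈ s(u, v) := heq ▸ Sym2.mem_mk_left r w
        rcases Sym2.mem_iff.1 this with rfl | rfl
        · exact hr hu
        · exact hr hv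
      have hinj : Set.InjOn (fun u => s(r, u)) ↑C := by
        intro a ha b hb hab
        simp only [Sym2.eq_iff] at hab
        rcases hab with ⟨-, h⟩ | ⟨h1, h2⟩
        · exact h
        · exfalso
          exact hner a (Finset.mem_filter.1 (Finset.mem_coe.1 ha)).1 h2
      calc C.card + E'.card
          = E'.card + (C.image (fun u => s(r, u))).card := by
            rw [Finset.card_image_of_injOn hinj, Nat.add_comm]
        _ = (E' ∪ C.image (fun u => s(r, u))).card :=
            (Finset.card_union_of_disjoint hdisj).symm
        _ ≤ F.card := Finset.card_le_card hsub2
  -- nonemptiness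
  have hUcov : ∀ e ∈ E', ∃ u ∈ U, u ∈ e := by
    intro e he
    obtain ⟨u, hu, v, hv, huv, rfl⟩ := hE' e he
    exact ⟨u, hu, by simp⟩
  obtain ⟨F₀, hF₀, -⟩ := hbuild U le_rfl hUcov
  have hAne : {h : ℕ | ∃ F, STHS F ∧ h = F.card}.Nonempty := ⟨F₀.card, F₀, hF₀, rfl⟩
  have hBne : {c : ℕ | ∃ C : Finset V, C ⊆ U ∧ (∀ e ∈ E', ∃ u ∈ C, u ∈ e)
      ∧ c = C.card}.Nonempty := ⟨U.card, U, le_rfl, hUcov, rfl⟩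
  apply le_antisymm
  · obtain ⟨C₀, hC₀U, hC₀cov, hC₀card⟩ := Nat.sInf_mem hBne
    obtain ⟨F, hF, hFcard⟩ := hbuild C₀ hC₀U hC₀cov
    exact le_trans (Nat.sInf_le ⟨F, hF, rfl⟩) (by omega)
  · obtain ⟨F, hF, hFcard⟩ := Nat.sInf_mem hAne
    obtain ⟨C, hCU, hCcov, hCcard⟩ := hextract F hF
    have hmem : C.card ∈ {c : ℕ | ∃ C : Finset V, C ⊆ U ∧
        (∀ e ∈ E', ∃ u ∈ C, u ∈ e) ∧ c = C.card} := ⟨C, hCU, hCcov, rfl⟩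
    have := Nat.sInf_le hmem
    omega
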